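/- arXiv:1602.02907 — 2 statements merged into one kernel-verified Lean document; each statement's English description precedes it below -/
import Mathlib

section
/- Let (Ω, F, P) be a probability space and let β : Ω × [0,∞) → ℝ be jointly measurable with β(·,x) square integrable for each x ≥ 0, satisfying the L²-Lipschitz condition E[|β(·,x₁) − β(·,x₂)|²] ≤ L|x₁ − x₂|² for all x₁, x₂ ≥ 0, where L > 0 is a constant. Let Δx > 0 and Δt > 0 with Δt ≤ Δx, set λ = Δt/Δx, let m ≥ 1 and t = mΔt, and let T be the operator acting on the spatial variable by (Tf)(x) = (1−λ) f(x) + λ f(x+Δx). Then for every x ≥ 0, E[|(T^m β(ω,·))(x) − β(ω, x+t)|²] ≤ L t (Δx − Δt). -/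
open MeasureTheory

-- eval of Bernstein polynomial
lemma bern_eval (p : ℝ) (n k : ℕ) :
    Polynomial.eval p (bernsteinPolynomial ℝ n k)
      = (n.choose k : ℝ) * p ^ k * (1 - p) ^ (n - k) := by
  simp [bernsteinPolynomial]

lemma binom_sum_one (p : ℝ) (m : ℕ) :
    ∑ k ∈ Finset.range (m + 1), (m.choose k : ℝ) * p ^ k * (1 - p) ^ (m - k) = 1 := by
  have h := congrArg (Polynomial.eval p) (bernsteinPolynomial.sum ℝ m)
  simpa [Polynomial.eval_finset_sum, bern_eval] using h

lemma binom_sum_smul (p : ℝ) (m : ℕ) :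
    ∑ k ∈ Finset.range (m + 1),
      (k : ℝ) * ((m.choose k : ℝ) * p ^ k * (1 - p) ^ (m - k)) = m * p := by
  have h := congrArg (Polynomial.eval p) (bernsteinPolynomial.sum_smul ℝ m)
  simpa [Polynomial.eval_finset_sum, bern_eval, nsmul_eq_mul, mul_assoc] using h

lemma binom_sum_mul_smul (p : ℝ) (m : ℕ) :
    ∑ k ∈ Finset.range (m + 1),
      ((k * (k - 1) : ℕ) : ℝ) * ((m.choose k : ℝ) * p ^ k * (1 - p) ^ (m - k))
      = ((m * (m - 1) : ℕ) : ℝ) * p ^ 2 := by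
  have h := congrArg (Polynomial.eval p) (bernsteinPolynomial.sum_mul_smul ℝ m)
  simpa [Polynomial.eval_finset_sum, bern_eval, nsmul_eq_mul, mul_assoc] using h

lemma nat_cast_mul_pred (k : ℕ) : ((k * (k - 1) : ℕ) : ℝ) = (k : ℝ) ^ 2 - k := by
  cases k with
  | zero => simp
  | succ n => push_cast [Nat.succ_sub_one]; ring

lemma binom_variance (p : ℝ) (m : ℕ) :
    ∑ k ∈ Finset.range (m + 1),
      (m.choose k : ℝ) * p ^ k * (1 - p) ^ (m - k) * ((k : ℝ) - m * p) ^ 2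
      = m * p * (1 - p) := by
  have key : ∀ k ∈ Finset.range (m + 1),
      (m.choose k : ℝ) * p ^ k * (1 - p) ^ (m - k) * ((k : ℝ) - m * p) ^ 2
      = ((k * (k - 1) : ℕ) : ℝ) * ((m.choose k : ℝ) * p ^ k * (1 - p) ^ (m - k))
        + (1 - 2 * (m * p)) * ((k : ℝ) * ((m.choose k : ℝ) * p ^ k * (1 - p) ^ (m - k)))
        + (m * p) ^ 2 * ((m.choose k : ℝ) * p ^ k * (1 - p) ^ (m - k)) := by
    intro k _
    rw [nat_cast_mul_pred]
    ring
  rw [Finset.sum_congr rfl key]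
  rw [Finset.sum_add_distrib, Finset.sum_add_distrib, ← Finset.mul_sum, ← Finset.mul_sum]
  rw [binom_sum_mul_smul, binom_sum_smul, binom_sum_one, nat_cast_mul_pred]
  ring

-- binomial expansion of the iterated operator
lemma iter_expand (lam Δx : ℝ) (hΔx : 0 ≤ Δx) (T : (ℝ → ℝ) → (ℝ → ℝ))
    (hT : ∀ (f : ℝ → ℝ) (x : ℝ), 0 ≤ x → T f x = (1 - lam) * f x + lam * f (x + Δx)) :
    ∀ (m : ℕ) (f : ℝ → ℝ) (x : ℝ), 0 ≤ x →
      T^[m] f x = ∑ k ∈ Finset.range (m + 1),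
        (m.choose k : ℝ) * lam ^ k * (1 - lam) ^ (m - k) * f (x + k * Δx) := by
  intro m
  induction m with
  | zero => intro f x hx; simp
  | succ n ih =>
    intro f x hx
    rw [Function.iterate_succ_apply', hT _ _ hx, ih f x hx, ih f (x + Δx) (by linarith)]
    have harg : ∀ k : ℕ, x + Δx + (k : ℝ) * Δx = x + ((k + 1 : ℕ) : ℝ) * Δx := by
      intro k; push_cast; ring
    calc (1 - lam) * ∑ k ∈ Finset.range (n + 1),
            (n.choose k : ℝ) * lam ^ k * (1 - lam) ^ (n - k) * f (x + k * Δx)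
          + lam * ∑ k ∈ Finset.range (n + 1),
            (n.choose k : ℝ) * lam ^ k * (1 - lam) ^ (n - k) * f (x + Δx + k * Δx)
        = (∑ k ∈ Finset.range (n + 1),
            (n.choose k : ℝ) * lam ^ k * (1 - lam) ^ (n + 1 - k) * f (x + k * Δx))
          + ∑ k ∈ Finset.range (n + 1),
            (n.choose k : ℝ) * lam ^ (k + 1) * (1 - lam) ^ (n - k) * f (x + ((k + 1 : ℕ) : ℝ) * Δx) := by
          rw [Finset.mul_sum, Finset.mul_sum]
          congr 1
          · refine Finset.sum_congr rfl fun k hk => ?_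
            have hkn : k ≤ n := Nat.lt_succ_iff.mp (Finset.mem_range.mp hk)
            have : n + 1 - k = (n - k) + 1 := by omega
            rw [this, pow_succ]
            ring
          · refine Finset.sum_congr rfl fun k hk => ?_
            rw [← harg k, pow_succ]
            ring
      _ = ∑ k ∈ Finset.range (n + 2),
            ((n + 1).choose k : ℝ) * lam ^ k * (1 - lam) ^ (n + 1 - k) * f (x + k * Δx) := by
          set g : ℕ → ℝ := fun k =>
            ((n + 1).choose k : ℝ) * lam ^ k * (1 - lam) ^ (n + 1 - k) * f (x + k * Δx) with hg
          set h : ℕ → ℝ := fun k =>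
            (n.choose k : ℝ) * lam ^ k * (1 - lam) ^ (n + 1 - k) * f (x + k * Δx) with hh
          have hsplit : ∀ i ∈ Finset.range (n + 1), g (i + 1)
              = (n.choose i : ℝ) * lam ^ (i + 1) * (1 - lam) ^ (n - i) * f (x + ((i + 1 : ℕ) : ℝ) * Δx)
                + h (i + 1) := by
            intro i _
            have hp : (n + 1).choose (i + 1) = n.choose i + n.choose (i + 1) :=
              Nat.choose_succ_succ n i
            have h2 : n + 1 - (i + 1) = n - i := by omega
            simp only [hg, hh, hp, h2]
            push_cast
            ring
          have hfirst : ∑ k ∈ Finset.range (n + 1), h k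
              = (∑ i ∈ Finset.range (n + 1), h (i + 1)) + h 0 := by
            have e1 : ∑ k ∈ Finset.range (n + 2), h k = ∑ k ∈ Finset.range (n + 1), h k := by
              rw [Finset.sum_range_succ]
              simp [hh]
            rw [← e1, Finset.sum_range_succ' h (n + 1)]
          rw [Finset.sum_range_succ' g (n + 1), Finset.sum_congr rfl hsplit,
            Finset.sum_add_distrib]
          have hcast : ∀ k ∈ Finset.range (n + 1),
              (n.choose k : ℝ) * lam ^ k * (1 - lam) ^ (n + 1 - k) * f (x + k * Δx) = h k := by
            intro k _; simp [hh]
          rw [Finset.sum_congr rfl hcast, hfirst]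
          have hg0 : g 0 = h 0 := by simp [hg, hh]
          rw [hg0]
          ring

/-- If `β : Ω × [0,∞) → ℝ` is jointly measurable, square integrable in `ω` for each `x ≥ 0`,
and satisfies the L²-Lipschitz condition `E[|β(x₁) − β(x₂)|²] ≤ L|x₁ − x₂|²`, then for the
finite-difference operator `(Tf)(x) = (1−λ) f(x) + λ f(x+Δx)` with `λ = Δt/Δx`, `Δt ≤ Δx`,
and `t = mΔt`, one has `E[|(T^m β)(x) − β(x+t)|²] ≤ L t (Δx − Δt)`. -/
theorem expected_square_error_iterated_operator_vs_shift
    {Ω : Type*} [MeasurableSpace Ω] (μ : Measure Ω) [IsProbabilityMeasure μ]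
    (β : Ω → ℝ → ℝ) (L : ℝ) (hL : 0 < L)
    (hmeas : Measurable fun q : Ω × ℝ => β q.1 q.2)
    (hsq : ∀ x : ℝ, 0 ≤ x → Integrable (fun ω => (β ω x) ^ 2) μ)
    (hlip : ∀ x₁ x₂ : ℝ, 0 ≤ x₁ → 0 ≤ x₂ →
      ∫ ω, |β ω x₁ - β ω x₂| ^ 2 ∂μ ≤ L * |x₁ - x₂| ^ 2)
    (Δx Δt lam t : ℝ) (hΔx : 0 < Δx) (hΔt : 0 < Δt) (hle : Δt ≤ Δx)
    (hlam : lam = Δt / Δx) (m : ℕ) (hm : 1 ≤ m) (ht : t = m * Δt)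
    (T : (ℝ → ℝ) → (ℝ → ℝ))
    (hT : ∀ (f : ℝ → ℝ) (x : ℝ), 0 ≤ x → T f x = (1 - lam) * f x + lam * f (x + Δx))
    (x : ℝ) (hx : 0 ≤ x) :
    ∫ ω, |(T^[m] (β ω)) x - β ω (x + t)| ^ 2 ∂μ ≤ L * t * (Δx - Δt) := by
  have hΔxne : Δx ≠ 0 := ne_of_gt hΔx
  have hlam0 : 0 ≤ lam := by rw [hlam]; positivity
  have hlam1 : lam ≤ 1 := by rw [hlam]; exact div_le_one_of_le₀ hle hΔx.le
  have hΔtlam : lam * Δx = Δt := by rw [hlam]; field_simp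
  have ht0 : 0 ≤ t := by
    rw [ht]; positivity
  set w : ℕ → ℝ := fun k => (m.choose k : ℝ) * lam ^ k * (1 - lam) ^ (m - k) with hwdef
  have hw : ∀ k, 0 ≤ w k := by
    intro k
    have h1 : (0:ℝ) ≤ 1 - lam := by linarith
    positivity
  have hw1 : ∑ k ∈ Finset.range (m + 1), w k = 1 := binom_sum_one lam m
  set a : ℕ → Ω → ℝ := fun k ω => β ω (x + k * Δx) - β ω (x + t) with hadef
  have hyk : ∀ k : ℕ, (0:ℝ) ≤ x + k * Δx := by
    intro k
    have : (0:ℝ) ≤ (k:ℝ) * Δx := by positivity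
    linarith
  have hxt : (0:ℝ) ≤ x + t := by linarith
  -- pointwise representation
  have hpt : ∀ ω, T^[m] (β ω) x - β ω (x + t)
      = ∑ k ∈ Finset.range (m + 1), w k * a k ω := by
    intro ω
    rw [iter_expand lam Δx hΔx.le T hT m (β ω) x hx]
    have e1 : ∑ k ∈ Finset.range (m + 1), w k * a k ω
        = (∑ k ∈ Finset.range (m + 1), w k * β ω (x + k * Δx))
          - (∑ k ∈ Finset.range (m + 1), w k) * β ω (x + t) := by
      rw [Finset.sum_mul, ← Finset.sum_sub_distrib]
      refine Finset.sum_congr rfl fun k _ => ?_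
      simp [hadef, mul_sub]
    rw [e1, hw1, one_mul]
  -- Cauchy–Schwarz / Jensen step
  have hCS : ∀ ω, (∑ k ∈ Finset.range (m + 1), w k * a k ω) ^ 2
      ≤ ∑ k ∈ Finset.range (m + 1), w k * (a k ω) ^ 2 := by
    intro ω
    have h := Finset.sum_mul_sq_le_sq_mul_sq (Finset.range (m + 1))
      (fun k => Real.sqrt (w k)) (fun k => Real.sqrt (w k) * a k ω)
    have e1 : ∀ k ∈ Finset.range (m + 1),
        Real.sqrt (w k) * (Real.sqrt (w k) * a k ω) = w k * a k ω := by
      intro k _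
      rw [← mul_assoc, Real.mul_self_sqrt (hw k)]
    have e2 : ∀ k ∈ Finset.range (m + 1), (Real.sqrt (w k)) ^ 2 = w k := by
      intro k _; exact Real.sq_sqrt (hw k)
    have e3 : ∀ k ∈ Finset.range (m + 1),
        (Real.sqrt (w k) * a k ω) ^ 2 = w k * (a k ω) ^ 2 := by
      intro k _
      rw [mul_pow, Real.sq_sqrt (hw k)]
    rw [Finset.sum_congr rfl e1, Finset.sum_congr rfl e2, Finset.sum_congr rfl e3, hw1,
      one_mul] at h
    exact h
  -- measurability and integrability
  have hmy : ∀ y : ℝ, Measurable fun ω => β ω y := fun y =>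
    hmeas.comp (measurable_id.prodMk measurable_const)
  have hIntd : ∀ y₁ y₂ : ℝ, 0 ≤ y₁ → 0 ≤ y₂ →
      Integrable (fun ω => (β ω y₁ - β ω y₂) ^ 2) μ := by
    intro y₁ y₂ h₁ h₂
    refine Integrable.mono' (g := fun ω => 2 * (β ω y₁) ^ 2 + 2 * (β ω y₂) ^ 2)
      (((hsq y₁ h₁).const_mul 2).add ((hsq y₂ h₂).const_mul 2))
      (((hmy y₁).sub (hmy y₂)).pow_const 2).aestronglyMeasurable ?_
    refine ae_of_all _ fun ω => ?_
    show ‖(β ω y₁ - β ω y₂) ^ 2‖ ≤ 2 * (β ω y₁) ^ 2 + 2 * (β ω y₂) ^ 2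
    rw [Real.norm_eq_abs, abs_of_nonneg (sq_nonneg _)]
    nlinarith [sq_nonneg (β ω y₁ + β ω y₂)]
  have hInta : ∀ k : ℕ, Integrable (fun ω => (a k ω) ^ 2) μ := fun k =>
    hIntd (x + k * Δx) (x + t) (hyk k) hxt
  have hIntsum : Integrable (fun ω => ∑ k ∈ Finset.range (m + 1), w k * (a k ω) ^ 2) μ :=
    integrable_finset_sum _ fun k _ => (hInta k).const_mul (w k)
  -- main estimate
  have h1 : ∫ ω, |T^[m] (β ω) x - β ω (x + t)| ^ 2 ∂μ
      ≤ ∫ ω, ∑ k ∈ Finset.range (m + 1), w k * (a k ω) ^ 2 ∂μ := by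
    refine integral_mono_of_nonneg (ae_of_all _ fun ω => by positivity) hIntsum
      (ae_of_all _ fun ω => ?_)
    show |T^[m] (β ω) x - β ω (x + t)| ^ 2 ≤ ∑ k ∈ Finset.range (m + 1), w k * (a k ω) ^ 2
    rw [sq_abs, hpt ω]
    exact hCS ω
  have h2 : ∫ ω, ∑ k ∈ Finset.range (m + 1), w k * (a k ω) ^ 2 ∂μ
      = ∑ k ∈ Finset.range (m + 1), w k * ∫ ω, (a k ω) ^ 2 ∂μ := by
    rw [integral_finset_sum _ fun k _ => (hInta k).const_mul (w k)]
    exact Finset.sum_congr rfl fun k _ => integral_const_mul _ _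
  have h3 : ∀ k ∈ Finset.range (m + 1),
      w k * ∫ ω, (a k ω) ^ 2 ∂μ ≤ w k * (L * ((k : ℝ) * Δx - t) ^ 2) := by
    intro k _
    refine mul_le_mul_of_nonneg_left ?_ (hw k)
    have h := hlip (x + k * Δx) (x + t) (hyk k) hxt
    have e1 : ∫ ω, |β ω (x + k * Δx) - β ω (x + t)| ^ 2 ∂μ = ∫ ω, (a k ω) ^ 2 ∂μ := by
      refine integral_congr_ae (ae_of_all _ fun ω => ?_)
      simp [hadef, sq_abs]
    have e2 : L * |x + (k:ℝ) * Δx - (x + t)| ^ 2 = L * ((k : ℝ) * Δx - t) ^ 2 := by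
      rw [sq_abs]; ring_nf
    rw [e1, e2] at h
    exact h
  have h4 : ∑ k ∈ Finset.range (m + 1), w k * (L * ((k : ℝ) * Δx - t) ^ 2)
      = L * t * (Δx - Δt) := by
    have e1 : ∀ k ∈ Finset.range (m + 1),
        w k * (L * ((k : ℝ) * Δx - t) ^ 2)
        = (L * Δx ^ 2) * ((m.choose k : ℝ) * lam ^ k * (1 - lam) ^ (m - k)
            * ((k : ℝ) - m * lam) ^ 2) := by
      intro k _
      have : (k : ℝ) * Δx - t = ((k : ℝ) - m * lam) * Δx := by
        rw [ht, ← hΔtlam]; ring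
      rw [this, hwdef]
      ring
    rw [Finset.sum_congr rfl e1, ← Finset.mul_sum, binom_variance]
    rw [ht, ← hΔtlam]
    ring
  calc ∫ ω, |T^[m] (β ω) x - β ω (x + t)| ^ 2 ∂μ
      ≤ ∑ k ∈ Finset.range (m + 1), w k * ∫ ω, (a k ω) ^ 2 ∂μ := h1.trans_eq h2
    _ ≤ ∑ k ∈ Finset.range (m + 1), w k * (L * ((k : ℝ) * Δx - t) ^ 2) :=
        Finset.sum_le_sum h3
    _ = L * t * (Δx - Δt) := h4
end

section
/- Let f : [0,∞) → ℝ satisfy |f(x₁) − f(x₂)|² ≤ L|x₁ − x₂|² for all x₁, x₂ ≥ 0, where L > 0 is a constant. Let Δx > 0 and Δt > 0 with Δt ≤ Δx, set λ = Δt/Δx, let m ≥ 1 and t = mΔt, and let T be the operator defined by (Tf)(x) = (1−λ) f(x) + λ f(x+Δx). Then for every x ≥ 0, |(T^m f)(x) − f(x+t)|² ≤ L t (Δx − Δt). -/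
open Finset Polynomial

noncomputable def pcoef (lam : ℝ) (m k : ℕ) : ℝ :=
  (m.choose k : ℝ) * lam ^ k * (1 - lam) ^ (m - k)

lemma pcoef_eval (lam : ℝ) (m k : ℕ) :
    Polynomial.eval lam (bernsteinPolynomial ℝ m k) = pcoef lam m k := by
  simp [bernsteinPolynomial, pcoef, mul_assoc]

lemma pcoef_nonneg {lam : ℝ} (h0 : 0 ≤ lam) (h1 : lam ≤ 1) (m k : ℕ) :
    0 ≤ pcoef lam m k := by
  have h2 : (0:ℝ) ≤ 1 - lam := by linarith
  exact mul_nonneg (mul_nonneg (Nat.cast_nonneg _) (pow_nonneg h0 _)) (pow_nonneg h2 _)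

lemma sum_pcoef (lam : ℝ) (m : ℕ) :
    ∑ k ∈ range (m + 1), pcoef lam m k = 1 := by
  have := congrArg (Polynomial.eval lam) (bernsteinPolynomial.sum ℝ m)
  simpa [Polynomial.eval_finset_sum, pcoef_eval] using this

lemma sum_pcoef_mul (lam : ℝ) (m : ℕ) :
    ∑ k ∈ range (m + 1), (k : ℝ) * pcoef lam m k = m * lam := by
  have := congrArg (Polynomial.eval lam) (bernsteinPolynomial.sum_smul ℝ m)
  simpa [Polynomial.eval_finset_sum, pcoef_eval] using this

lemma sum_pcoef_mul_mul (lam : ℝ) (m : ℕ) :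
    ∑ k ∈ range (m + 1), (k : ℝ) * ((k:ℝ) - 1) * pcoef lam m k
      = m * (m - 1) * lam ^ 2 := by
  have := congrArg (Polynomial.eval lam) (bernsteinPolynomial.sum_mul_smul ℝ m)
  rw [Polynomial.eval_finset_sum] at this
  simp only [Polynomial.eval_smul, pcoef_eval, smul_eq_mul] at this
  rw [Polynomial.eval_pow, Polynomial.eval_X] at this
  have cast1 : ∀ k : ℕ, ((k * (k-1) : ℕ) : ℝ) = (k:ℝ) * ((k:ℝ) - 1) := by
    rintro (_|k) <;> push_cast <;> ring
  have cast2 : ((m * (m-1) : ℕ) : ℝ) = (m:ℝ) * ((m:ℝ) - 1) := cast1 m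
  calc ∑ k ∈ range (m + 1), (k : ℝ) * ((k:ℝ) - 1) * pcoef lam m k
      = ∑ k ∈ range (m + 1), ((k * (k-1) : ℕ) : ℝ) * pcoef lam m k := by
        refine Finset.sum_congr rfl fun k _ => by rw [cast1]
    _ = ((m * (m-1) : ℕ) : ℝ) * lam ^ 2 := by
        simpa [nsmul_eq_mul] using this
    _ = m * (m - 1) * lam ^ 2 := by rw [cast2]

lemma pcoef_succ_zero (lam : ℝ) (m : ℕ) :
    pcoef lam (m+1) 0 = (1 - lam) * pcoef lam m 0 := by
  simp [pcoef, pow_succ]; ring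

lemma pcoef_succ (lam : ℝ) {m k : ℕ} (hk : k ≤ m) :
    pcoef lam (m+1) (k+1)
      = (1 - lam) * pcoef lam m (k+1) + lam * pcoef lam m k := by
  rcases lt_or_eq_of_le hk with h | rfl
  · have h1 : m - (k+1) + 1 = m - k := by omega
    have h2 : m + 1 - (k+1) = m - k := by omega
    unfold pcoef
    rw [Nat.choose_succ_succ, h2, ← h1]
    push_cast
    ring
  · simp [pcoef, Nat.choose_succ_self, Nat.sub_self]
    ring

lemma pcoef_self_succ (lam : ℝ) (m : ℕ) : pcoef lam m (m+1) = 0 := by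
  simp [pcoef, Nat.choose_succ_self]

lemma iterate_rep (f : ℝ → ℝ) (lam Δx : ℝ) (hΔx : 0 < Δx)
    (T : (ℝ → ℝ) → (ℝ → ℝ))
    (hT : ∀ (g : ℝ → ℝ) (x : ℝ), 0 ≤ x → T g x = (1 - lam) * g x + lam * g (x + Δx)) :
    ∀ (m : ℕ) (x : ℝ), 0 ≤ x →
      T^[m] f x = ∑ k ∈ range (m+1), pcoef lam m k * f (x + k * Δx) := by
  intro m
  induction m with
  | zero => intro x hx; simp [pcoef]
  | succ m IH =>
    intro x hx
    rw [Function.iterate_succ_apply', hT _ x hx, IH x hx,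
        IH (x + Δx) (by linarith)]
    have hS1 : ∑ k ∈ range (m+1), pcoef lam m k * f (x + k*Δx)
        = (∑ k ∈ range (m+1), pcoef lam m (k+1) * f (x + ((k:ℕ)+1:ℕ)*Δx))
          + pcoef lam m 0 * f (x + ((0:ℕ):ℝ)*Δx) := by
      rw [Finset.sum_range_succ' (fun k => pcoef lam m k * f (x + k*Δx)) m,
          Finset.sum_range_succ (fun k => pcoef lam m (k+1) * f (x + ((k:ℕ)+1:ℕ)*Δx)) m,
          pcoef_self_succ]
      ring
    have hS2 : ∑ k ∈ range (m+1), pcoef lam m k * f (x + Δx + k*Δx)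
        = ∑ k ∈ range (m+1), pcoef lam m k * f (x + ((k:ℕ)+1:ℕ)*Δx) := by
      refine Finset.sum_congr rfl fun k _ => ?_
      congr 1
      congr 1
      push_cast
      ring
    rw [hS1, hS2,
        Finset.sum_range_succ' (fun k => pcoef lam (m+1) k * f (x + k*Δx)) (m+1)]
    rw [mul_add, Finset.mul_sum, Finset.mul_sum, add_right_comm, ← Finset.sum_add_distrib]
    have : ∀ k ∈ range (m+1),
        (1-lam) * (pcoef lam m (k+1) * f (x + ((k:ℕ)+1:ℕ)*Δx))
          + lam * (pcoef lam m k * f (x + ((k:ℕ)+1:ℕ)*Δx))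
        = pcoef lam (m+1) (k+1) * f (x + ((k:ℕ)+1:ℕ)*Δx) := by
      intro k hk
      rw [pcoef_succ lam (Nat.lt_succ_iff.mp (Finset.mem_range.mp hk))]
      ring
    rw [Finset.sum_congr rfl this, pcoef_succ_zero]
    ring

lemma variance_sum (lam Δx t : ℝ) (m : ℕ) (ht : t = m * (lam * Δx)) :
    ∑ k ∈ range (m+1), pcoef lam m k * ((k:ℝ)*Δx - t)^2
      = m * lam * (1 - lam) * Δx^2 := by
  have expand : ∀ k : ℕ, pcoef lam m k * ((k:ℝ)*Δx - t)^2
      = Δx^2 * ((k:ℝ)*((k:ℝ)-1) * pcoef lam m k)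
        + (Δx^2 - 2*t*Δx) * ((k:ℝ) * pcoef lam m k) + t^2 * pcoef lam m k := by
    intro k; ring
  rw [Finset.sum_congr rfl (fun k _ => expand k), Finset.sum_add_distrib,
      Finset.sum_add_distrib, ← Finset.mul_sum, ← Finset.mul_sum, ← Finset.mul_sum,
      sum_pcoef, sum_pcoef_mul, sum_pcoef_mul_mul]
  subst ht; ring


/-- Deterministic convergence of the iterated finite-difference operator to the shift:
if `|f(x₁) − f(x₂)|² ≤ L|x₁ − x₂|²` for all `x₁, x₂ ≥ 0`, `(Tf)(x) = (1−λ)f(x) + λf(x+Δx)`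
with `λ = Δt/Δx`, `Δt ≤ Δx` and `t = mΔt`, then `|(T^m f)(x) − f(x+t)|² ≤ L t (Δx − Δt)`. -/
theorem square_error_iterated_operator_vs_shift_lipschitz
    (f : ℝ → ℝ) (L : ℝ) (hL : 0 < L)
    (hlip : ∀ x₁ x₂ : ℝ, 0 ≤ x₁ → 0 ≤ x₂ → |f x₁ - f x₂| ^ 2 ≤ L * |x₁ - x₂| ^ 2)
    (Δx Δt lam t : ℝ) (hΔx : 0 < Δx) (hΔt : 0 < Δt) (hle : Δt ≤ Δx)
    (hlam : lam = Δt / Δx) (m : ℕ) (hm : 1 ≤ m) (ht : t = m * Δt)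
    (T : (ℝ → ℝ) → (ℝ → ℝ))
    (hT : ∀ (g : ℝ → ℝ) (x : ℝ), 0 ≤ x → T g x = (1 - lam) * g x + lam * g (x + Δx))
    (x : ℝ) (hx : 0 ≤ x) :
    |(T^[m] f) x - f (x + t)| ^ 2 ≤ L * t * (Δx - Δt) := by
  have hlam0 : 0 ≤ lam := by rw [hlam]; positivity
  have hlam1 : lam ≤ 1 := by rw [hlam]; exact div_le_one_of_le₀ hle hΔx.le
  have hΔt' : Δt = lam * Δx := by rw [hlam]; field_simp
  have ht0 : 0 ≤ t := by
    rw [ht]; positivity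
  rw [iterate_rep f lam Δx hΔx T hT m x hx]
  set a : ℕ → ℝ := fun k => f (x + k*Δx) - f (x + t) with ha
  have hsum : ∑ k ∈ range (m+1), pcoef lam m k * f (x + k*Δx) - f (x+t)
      = ∑ k ∈ range (m+1), pcoef lam m k * a k := by
    simp only [ha, mul_sub]
    rw [Finset.sum_sub_distrib, ← Finset.sum_mul, sum_pcoef, one_mul]
  rw [hsum, sq_abs]
  have hCS : (∑ k ∈ range (m+1), pcoef lam m k * a k) ^ 2
      ≤ ∑ k ∈ range (m+1), pcoef lam m k * a k ^ 2 := by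
    have := sum_sq_le_sum_mul_sum_of_sq_eq_mul (range (m+1))
      (r := fun k => pcoef lam m k * a k)
      (f := fun k => pcoef lam m k)
      (g := fun k => pcoef lam m k * a k ^ 2)
      (fun k _ => pcoef_nonneg hlam0 hlam1 m k)
      (fun k _ => mul_nonneg (pcoef_nonneg hlam0 hlam1 m k) (sq_nonneg _))
      (fun k _ => by ring)
    rwa [sum_pcoef, one_mul] at this
  refine hCS.trans ?_
  have hterm : ∀ k ∈ range (m+1),
      pcoef lam m k * a k ^ 2 ≤ pcoef lam m k * (L * ((k:ℝ)*Δx - t)^2) := by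
    intro k _
    refine mul_le_mul_of_nonneg_left ?_ (pcoef_nonneg hlam0 hlam1 m k)
    have h1 : (0:ℝ) ≤ x + k*Δx := by positivity
    have h2 : (0:ℝ) ≤ x + t := by linarith
    have := hlip (x + k*Δx) (x + t) h1 h2
    have harg : x + (k:ℝ)*Δx - (x + t) = (k:ℝ)*Δx - t := by ring
    rw [harg] at this
    calc a k ^ 2 = |a k| ^ 2 := (sq_abs _).symm
      _ ≤ L * |(k:ℝ)*Δx - t| ^ 2 := this
      _ = L * ((k:ℝ)*Δx - t)^2 := by rw [sq_abs]
  refine (Finset.sum_le_sum hterm).trans ?_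
  have : ∑ k ∈ range (m+1), pcoef lam m k * (L * ((k:ℝ)*Δx - t)^2)
      = L * ∑ k ∈ range (m+1), pcoef lam m k * ((k:ℝ)*Δx - t)^2 := by
    rw [Finset.mul_sum]; refine Finset.sum_congr rfl fun k _ => by ring
  rw [this, variance_sum lam Δx t m (by rw [ht, hΔt'])]
  have : L * ((m:ℝ) * lam * (1 - lam) * Δx^2) = L * t * (Δx - Δt) := by
    rw [ht, hΔt']; ring
  linarith [le_of_eq this]
end
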